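/- arXiv:2206.14035 — 2 statements merged into one kernel-verified Lean document; each statement's English description precedes it below -/
import Mathlib

section
/- For every natural number j, W(j) + 2p^j(p − 1) = 2(p^n − 1)·r(j) + 2p^{j+1} + 1. (This is the closed formula for the cohomological degree of the generator w_{n+j+1/2} = y_j^{p−1} w_{n+j}.) -/
/-- `q(k) = ∑_{m<k} p^{m(n+1)}`. -/
def qq (p n k : ℕ) : ℕ := ∑ m ∈ Finset.range k, p ^ (m * (n + 1))

/-- `r(j) = p^{i+1}(p^n-1) q(k) + k + p^i` where `j = i + k(n+1)`, `0 ≤ i ≤ n`. -/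
def rr (p n j : ℕ) : ℕ :=
  p ^ (j % (n + 1) + 1) * (p ^ n - 1) * qq p n (j / (n + 1)) + j / (n + 1) + p ^ (j % (n + 1))

/-- `r'(j) = p^{j+1} - r(j)`. -/
def rr' (p n j : ℕ) : ℕ := p ^ (j + 1) - rr p n j

/-- `W(j) = |w_{n+j}|`: `W(j) = 2p^{n+j}+1` for `0 ≤ j ≤ n`, and
`W(j+n+1) = 2p^j(p-1) + W(j) + 2(p^n-1)(p^{n+j+1}+1)`. -/
def WW (p n : ℕ) (j : ℕ) : ℕ :=
  if h : j < n + 1 then 2 * p ^ (n + j) + 1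
  else 2 * p ^ (j - (n + 1)) * (p - 1) + WW p n (j - (n + 1))
       + 2 * (p ^ n - 1) * (p ^ ((j - (n + 1)) + n + 1) + 1)
termination_by j
decreasing_by omega

lemma rr_step (p n j : ℕ) (hp : 1 ≤ p) :
    rr p n (j + (n + 1)) = rr p n j + (p ^ n - 1) * p ^ (j + 1) + 1 := by
  have hmod : (j + (n + 1)) % (n + 1) = j % (n + 1) := by
    simp [Nat.add_mod_right]
  have hdiv : (j + (n + 1)) / (n + 1) = j / (n + 1) + 1 := by
    rw [Nat.add_div_right _ (Nat.succ_pos n)]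
  have hq : qq p n (j / (n + 1) + 1)
      = qq p n (j / (n + 1)) + p ^ (j / (n + 1) * (n + 1)) := by
    simp [qq, Finset.sum_range_succ]
  have hj : j % (n + 1) + j / (n + 1) * (n + 1) = j := Nat.mod_add_div' j (n + 1)
  rw [rr, hmod, hdiv, hq, rr]
  have : p ^ (j % (n + 1) + 1) * p ^ (j / (n + 1) * (n + 1)) = p ^ (j + 1) := by
    rw [← pow_add]
    congr 1
    omega
  have hpn : 1 ≤ p ^ n := Nat.one_le_pow _ _ hp
  have key : ((p:ℤ)) ^ (j % (n + 1) + 1) * p ^ (j / (n + 1) * (n + 1)) = p ^ (j + 1) := by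
    exact_mod_cast this
  zify [hpn]
  linear_combination ((p:ℤ) ^ n - 1) * key

/-- Closed formula for the degree of `w_{n+j+1/2} = y_j^{p-1} w_{n+j}`:
`W(j) + 2p^j(p-1) = 2(p^n-1)*r(j) + 2p^{j+1} + 1`. -/
theorem W_half_closed_formula (p n : ℕ) (hp : p.Prime) (hn : 1 ≤ n) (j : ℕ) :
    WW p n j + 2 * p ^ j * (p - 1) = 2 * (p ^ n - 1) * rr p n j + 2 * p ^ (j + 1) + 1 := by
  have hp1 : 1 ≤ p := hp.one_lt.le
  have hpn : 1 ≤ p ^ n := Nat.one_le_pow _ _ hp.pos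
  induction j using Nat.strong_induction_on with
  | _ j ih =>
    by_cases h : j < n + 1
    · have hrr : rr p n j = p ^ j := by
        rw [rr, Nat.mod_eq_of_lt h, Nat.div_eq_of_lt h]
        simp [qq]
      rw [WW, dif_pos h, hrr, pow_add, pow_add]
      zify [hp1, hpn]
      ring
    · obtain ⟨j', rfl⟩ : ∃ j', j = j' + (n + 1) := ⟨j - (n+1), by omega⟩
      rw [WW, dif_neg h]
      simp only [Nat.add_sub_cancel]
      rw [rr_step p n j' hp1]
      have hih := ih j' (by omega)
      have hpj : 1 ≤ p ^ j' := Nat.one_le_pow _ _ hp.pos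
      have e1 : p ^ (j' + n + 1) = p ^ j' * p ^ n * p := by rw [pow_succ, pow_add]
      have e2 : p ^ (j' + (n + 1)) = p ^ j' * p ^ n * p := by
        rw [pow_add, pow_succ, ← mul_assoc]
      have e3 : p ^ (j' + (n + 1) + 1) = p ^ j' * p ^ n * p * p := by
        rw [pow_succ, e2]
      have e4 : p ^ (j' + 1) = p ^ j' * p := pow_succ p j'
      rw [e4] at hih
      rw [e2, e3, e4, e1]
      zify [hp1, hpn] at hih ⊢
      linear_combination hih
end

section
/- If p = 2, then: (a) for every j with 0 ≤ j ≤ n+1 one has r(j) = r'(j) = 2^j; (b) for every j > n+1 one has r(j) < r'(j); and (c) for every j one has r'(j) < r(j+1). -/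
lemma qq_succ (n k : ℕ) : qq 2 n (k+1) = qq 2 n k + 2 ^ (k*(n+1)) := by
  simp [qq, Finset.sum_range_succ]

lemma key (n k : ℕ) : (2^(n+1) - 1) * qq 2 n k + 1 = 2 ^ (k*(n+1)) := by
  induction k with
  | zero => simp [qq]
  | succ k ih =>
    have hpow : 2 ^ ((k+1)*(n+1)) = 2^(n+1) * 2^(k*(n+1)) := by
      rw [← pow_add]; ring_nf
    have hsub : (2^(n+1) - 1) * 2^(k*(n+1)) = 2^(n+1) * 2^(k*(n+1)) - 2^(k*(n+1)) := by
      rw [Nat.sub_mul, one_mul]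
    have hle : 2^(k*(n+1)) ≤ 2^(n+1) * 2^(k*(n+1)) :=
      Nat.le_mul_of_pos_left _ (by positivity)
    rw [qq_succ, Nat.mul_add, hpow, hsub]
    omega

lemma hcf (n i k : ℕ) (hi : i ≤ n) :
    rr 2 n (i + k*(n+1)) + 2^i * qq 2 n k = 2 ^ (i + k*(n+1)) + k := by
  have hm : (i + k*(n+1)) % (n+1) = i := by
    rw [Nat.add_mul_mod_self_right, Nat.mod_eq_of_lt (by omega)]
  have hd : (i + k*(n+1)) / (n+1) = k := by
    rw [Nat.add_mul_div_right _ _ (by omega), Nat.div_eq_of_lt (by omega)]; omega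
  unfold rr
  rw [hm, hd, show (2:ℕ)^(i+k*(n+1)) = 2^i * 2^(k*(n+1)) from pow_add 2 i _, ← key n k]
  obtain ⟨a, ha⟩ : ∃ a, 2^n = a + 1 := ⟨2^n - 1, by have := Nat.one_le_two_pow (n := n); omega⟩
  have h1 : (2:ℕ)^(i+1) = 2*2^i := by rw [pow_succ]; ring
  have h2 : (2:ℕ)^(n+1) = 2*(a+1) := by rw [pow_succ, ha]; ring
  rw [h1, h2, ha, show (a+1) - 1 = a by omega, show 2*(a+1) - 1 = 2*a+1 by omega]
  ring

lemma qge (n k : ℕ) : k ≤ qq 2 n k := by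
  calc k = ∑ _m ∈ Finset.range k, 1 := by simp
  _ ≤ qq 2 n k := Finset.sum_le_sum (fun m _ => Nat.one_le_two_pow)

lemma qgt (n k : ℕ) (hn : 1 ≤ n) (hk : 2 ≤ k) : k < qq 2 n k := by
  have h1 : 2^((k-1)*(n+1)) ≤ qq 2 n k :=
    Finset.single_le_sum (f := fun m => 2 ^ (m * (n + 1))) (fun _ _ => Nat.zero_le _)
      (Finset.mem_range.mpr (by omega))
  have h2 : k < 2^k := Nat.lt_two_pow_self (n := k)
  have hmul : (k-1)*2 ≤ (k-1)*(n+1) := Nat.mul_le_mul_left (k-1) (show 2 ≤ n+1 by omega)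
  have h3 : (2:ℕ)^k ≤ 2^((k-1)*(n+1)) := Nat.pow_le_pow_right (by norm_num) (by omega)
  omega

lemma repr_exists (n j : ℕ) : ∃ i k, j = i + k*(n+1) ∧ i ≤ n := by
  refine ⟨j % (n+1), j / (n+1), ?_, ?_⟩
  · rw [Nat.mul_comm]; exact (Nat.mod_add_div j (n+1)).symm
  · have := Nat.mod_lt j (y := n+1) (by omega); omega

/-- For `p = 2`: `r(j) = r'(j) = 2^j` for `0 <= j <= n+1`, `r(j) < r'(j)` for `j > n+1`,
and `r'(j) < r(j+1)` for all `j`. -/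
theorem r_r'_at_two (n : ℕ) (hn : 1 ≤ n) :
    (∀ j ≤ n + 1, rr 2 n j = 2 ^ j ∧ rr' 2 n j = 2 ^ j) ∧
    (∀ j, n + 1 < j → rr 2 n j < rr' 2 n j) ∧
    (∀ j, rr' 2 n j < rr 2 n (j + 1)) := by
  have h2n : 2 ≤ 2^n := by
    calc (2:ℕ) = 2^1 := rfl
    _ ≤ 2^n := Nat.pow_le_pow_right (by norm_num) hn
  refine ⟨?_, ?_, ?_⟩
  · intro j hj
    rcases Nat.lt_or_ge j (n+1) with h | h
    · have hc := hcf n j 0 (by omega)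
      simp [qq] at hc
      refine ⟨hc, ?_⟩
      unfold rr'
      have hp : (2:ℕ)^(j+1) = 2*2^j := by rw [pow_succ]; ring
      omega
    · have hj' : j = n+1 := by omega
      subst hj'
      have hc := hcf n 0 1 (by omega)
      have hq1 : qq 2 n 1 = 1 := by simp [qq]
      rw [hq1] at hc
      simp only [zero_add, one_mul, pow_zero, mul_one] at hc
      constructor
      · omega
      · unfold rr'
        have hp : (2:ℕ)^(n+1+1) = 2*2^(n+1) := by rw [pow_succ]; ring
        omega
  · intro j hj
    obtain ⟨i, k, hik, hi⟩ := repr_exists n j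
    subst hik
    have hc := hcf n i k hi
    have hlt : k < 2^i * qq 2 n k := by
      rcases Nat.lt_or_ge k 2 with hk | hk
      · interval_cases k
        · omega
        · have hi1 : 1 ≤ i := by omega
          have hq1 : qq 2 n 1 = 1 := by simp [qq]
          rw [hq1, mul_one]
          calc 1 < 2 := one_lt_two
          _ = 2^1 := rfl
          _ ≤ 2^i := Nat.pow_le_pow_right (by norm_num) hi1
      · calc k < qq 2 n k := qgt n k hn hk
        _ ≤ 2^i * qq 2 n k := Nat.le_mul_of_pos_left _ (by positivity)
    unfold rr'
    have hp : (2:ℕ)^(i + k*(n+1) + 1) = 2*2^(i + k*(n+1)) := by rw [pow_succ]; ring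
    omega
  · intro j
    obtain ⟨i, k, hik, hi⟩ := repr_exists n j
    subst hik
    have hc := hcf n i k hi
    have hkX : k ≤ 2^i * qq 2 n k :=
      le_trans (qge n k) (Nat.le_mul_of_pos_left _ (by positivity))
    have hkey := key n k
    have hp : (2:ℕ)^(i + k*(n+1) + 1) = 2*2^(i + k*(n+1)) := by rw [pow_succ]; ring
    rcases Nat.lt_or_ge i n with hin | hin
    · have hc2 := hcf n (i+1) k (by omega)
      have he : (i+1) + k*(n+1) = (i + k*(n+1)) + 1 := by omega
      rw [he] at hc2
      have hq3 : 3 * qq 2 n k < 2^(k*(n+1)) := by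
        have h4 : 4 ≤ 2^(n+1) := by
          calc (4:ℕ) = 2^2 := rfl
          _ ≤ 2^(n+1) := Nat.pow_le_pow_right (by norm_num) (by omega)
        have hm3 : 3 * qq 2 n k ≤ (2^(n+1) - 1) * qq 2 n k :=
          Nat.mul_le_mul_right _ (by omega)
        omega
      have hX3 : 3 * (2^i * qq 2 n k) < 2^(i + k*(n+1)) := by
        calc 3 * (2^i * qq 2 n k) = 2^i * (3 * qq 2 n k) := by ring
        _ < 2^i * 2^(k*(n+1)) := by gcongr
        _ = 2^(i + k*(n+1)) := (pow_add 2 i _).symm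
      have h21 : (2:ℕ)^(i+1) * qq 2 n k = 2 * (2^i * qq 2 n k) := by rw [pow_succ]; ring
      rw [h21] at hc2
      unfold rr'
      omega
    · have hin' : n = i := by omega
      subst hin'
      have hc2 := hcf n 0 (k+1) (by omega)
      have he : 0 + (k+1)*(n+1) = (n + k*(n+1)) + 1 := by rw [Nat.succ_mul]; omega
      rw [he, qq_succ] at hc2
      simp only [pow_zero, one_mul] at hc2
      have hXE : 2^n * qq 2 n k + qq 2 n k + 1 ≤ 2^(k*(n+1)) := by
        have hle : 2^n + 1 ≤ 2^(n+1) - 1 := by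
          have : (2:ℕ)^(n+1) = 2*2^n := by rw [pow_succ]; ring
          omega
        have h1 : (2^n + 1) * qq 2 n k ≤ (2^(n+1) - 1) * qq 2 n k :=
          Nat.mul_le_mul_right _ hle
        have h2 : (2^n + 1) * qq 2 n k = 2^n * qq 2 n k + qq 2 n k := by ring
        omega
      have hE2 : 2 * 2^(k*(n+1)) ≤ 2^(n + k*(n+1)) := by
        calc 2 * 2^(k*(n+1)) ≤ 2^n * 2^(k*(n+1)) := Nat.mul_le_mul_right _ h2n
        _ = 2^(n + k*(n+1)) := (pow_add 2 n _).symm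
      unfold rr'
      omega
end
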